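/- Let S = M^1_{\geq 0} \times \cdots \times M^d_{\geq 0}. An ideal set I \subsetneq S is called m-irreducible if whenever I = J \cap K for ideal sets J, K, one has I = J or I = K. Suppose I = \bigcap_{i=1}^m P_i = \bigcap_{j=1}^n Q_j are two irredundant finite intersections of m-irreducible ideal sets (irredundant meaning no P_i contains another P_{i'}, i \neq i', and similarly for the Q_j). Then {P_1, ..., P_m} = {Q_1, ..., Q_n} as sets, and m = n. -/

import Mathlib

/-- The semigroup `S = M^1_{≥0} × ⋯ × M^d_{≥0}`, realized as a subset of `Fin d → ℝ`. -/
def Sset {d : ℕ} (M : Fin d → AddSubgroup ℝ) : Set (Fin d → ℝ) :=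
  {s | ∀ i, s i ∈ M i ∧ 0 ≤ s i}

/-- The "monomial ideal set" (up-set) generated by `T ⊆ S`. -/
def Up {d : ℕ} (M : Fin d → AddSubgroup ℝ) (T : Set (Fin d → ℝ)) : Set (Fin d → ℝ) :=
  {s | ∃ t ∈ T, ∃ u ∈ Sset M, s = t + u}

/-- An ideal set of `S`: a subset of `S` closed under adding arbitrary elements of `S`. -/
def IsIdealSet {d : ℕ} (M : Fin d → AddSubgroup ℝ) (I : Set (Fin d → ℝ)) : Prop :=
  I ⊆ Sset M ∧ ∀ s ∈ I, ∀ u ∈ Sset M, s + u ∈ I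

/-- The m-prime ideal set `Q_T = {s ∈ S | s i > 0 for some i ∈ T}`. -/
def QT {d : ℕ} (M : Fin d → AddSubgroup ℝ) (T : Finset (Fin d)) : Set (Fin d → ℝ) :=
  {s ∈ Sset M | ∃ i ∈ T, 0 < s i}

/-- An m-prime ideal set: a proper ideal set `P` with `f + g ∈ P → f ∈ P ∨ g ∈ P`. -/
def IsMPrime {d : ℕ} (M : Fin d → AddSubgroup ℝ) (P : Set (Fin d → ℝ)) : Prop :=
  IsIdealSet M P ∧ P ≠ Sset M ∧
    ∀ f ∈ Sset M, ∀ g ∈ Sset M, f + g ∈ P → f ∈ P ∨ g ∈ P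

/-- An m-irreducible ideal set. -/
def MIrred {d : ℕ} (M : Fin d → AddSubgroup ℝ) (I : Set (Fin d → ℝ)) : Prop :=
  IsIdealSet M I ∧ I ≠ Sset M ∧
    ∀ J K : Set (Fin d → ℝ), IsIdealSet M J → IsIdealSet M K → I = J ∩ K → I = J ∨ I = K

/-- Monomial Krull dimension: `sup {d - |T| : Q_T ⊇ I}` (m-primes are exactly the `Q_T`). -/
noncomputable def mdim {d : ℕ} (M : Fin d → AddSubgroup ℝ) (I : Set (Fin d → ℝ)) : ℕ :=
  sSup {n : ℕ | ∃ T : Finset (Fin d), I ⊆ QT M T ∧ n = d - T.card}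

/-- Euclidean distance between exponent vectors. -/
noncomputable def myDist {d : ℕ} (γ δ : Fin d → ℝ) : ℝ :=
  Real.sqrt (∑ i, (γ i - δ i) ^ 2)

/-- `dist(I,J) < ε` in the sense of Definition 4.5 of the paper. -/
def DistLT {d : ℕ} (ε : ℝ) (I J : Set (Fin d → ℝ)) : Prop :=
  (∀ γ ∈ I, ∃ δ ∈ J, myDist γ δ < ε) ∧ (∀ δ ∈ J, ∃ γ ∈ I, myDist γ δ < ε)

/-- Distance between ideal sets (Definition 4.6). -/
noncomputable def idealDist {d : ℕ} (I J : Set (Fin d → ℝ)) : ℝ :=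
  sInf {ε : ℝ | 0 < ε ∧ DistLT ε I J}

/-- Finitely generated ideal set. -/
def IsFG {d : ℕ} (M : Fin d → AddSubgroup ℝ) (I : Set (Fin d → ℝ)) : Prop :=
  ∃ G : Finset (Fin d → ℝ), ↑G ⊆ Sset M ∧ I = Up M ↑G

lemma ideal_union {d : ℕ} (M : Fin d → AddSubgroup ℝ) {I J : Set (Fin d → ℝ)}
    (hI : IsIdealSet M I) (hJ : IsIdealSet M J) : IsIdealSet M (I ∪ J) := by
  constructor
  · exact Set.union_subset hI.1 hJ.1
  · rintro s (hs | hs) u hu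
    · exact Or.inl (hI.2 s hs u hu)
    · exact Or.inr (hJ.2 s hs u hu)

lemma ideal_biInter {d n : ℕ} (M : Fin d → AddSubgroup ℝ) (Q : Fin n → Set (Fin d → ℝ))
    (hQ : ∀ j, IsIdealSet M (Q j)) (s : Finset (Fin n)) (hs : s.Nonempty) :
    IsIdealSet M (⋂ j ∈ s, Q j) := by
  obtain ⟨a, ha⟩ := hs
  constructor
  · intro x hx
    exact (hQ a).1 (Set.mem_iInter₂.mp hx a ha)
  · intro x hx u hu
    rw [Set.mem_iInter₂] at hx ⊢
    intro j hj
    exact (hQ j).2 x (hx j hj) u hu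

lemma key_lemma {d n : ℕ} (M : Fin d → AddSubgroup ℝ) (Q : Fin n → Set (Fin d → ℝ))
    (hQ : ∀ j, IsIdealSet M (Q j)) {P : Set (Fin d → ℝ)} (hP : MIrred M P) :
    ∀ s : Finset (Fin n), s.Nonempty → (⋂ j ∈ s, Q j) ⊆ P → ∃ j ∈ s, Q j ⊆ P := by
  intro s
  induction s using Finset.induction with
  | empty => intro h; simp at h
  | insert _ _ ha =>
    rename_i a t ih
    intro _ hsub
    by_cases ht : t.Nonempty
    · have h1 : IsIdealSet M (P ∪ Q a) := ideal_union M hP.1 (hQ a)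
      have h2 : IsIdealSet M (P ∪ ⋂ j ∈ t, Q j) :=
        ideal_union M hP.1 (ideal_biInter M Q hQ t ht)
      have hins : (⋂ j ∈ insert a t, Q j) = Q a ∩ ⋂ j ∈ t, Q j := by
        simp [Set.biInter_insert]
      have hPeq : P = (P ∪ Q a) ∩ (P ∪ ⋂ j ∈ t, Q j) := by
        rw [← Set.union_inter_distrib_left, ← hins]
        exact (Set.union_eq_self_of_subset_right hsub).symm
      rcases hP.2.2 _ _ h1 h2 hPeq with h | h
      · refine ⟨a, Finset.mem_insert_self a t, ?_⟩
        rw [h]; exact Set.subset_union_right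
      · have : (⋂ j ∈ t, Q j) ⊆ P := by
          rw [h]; exact Set.subset_union_right
        obtain ⟨j, hj, hjsub⟩ := ih ht this
        exact ⟨j, Finset.mem_insert_of_mem hj, hjsub⟩
    · rw [Finset.not_nonempty_iff_eq_empty] at ht
      subst ht
      exact ⟨a, by simp, by simpa using hsub⟩

/-- uniqueness of irredundant finite m-irreducible decompositions. -/
theorem stmt6 (d m n : ℕ) (M : Fin d → AddSubgroup ℝ) (hM : ∀ i, M i ≠ ⊥)
    (P : Fin m → Set (Fin d → ℝ)) (Q : Fin n → Set (Fin d → ℝ))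
    (hP : ∀ i, MIrred M (P i)) (hQ : ∀ j, MIrred M (Q j))
    (hPirr : ∀ i i', i ≠ i' → ¬ P i ⊆ P i')
    (hQirr : ∀ j j', j ≠ j' → ¬ Q j ⊆ Q j')
    (heq : (⋂ i, P i) = ⋂ j, Q j) :
    Set.range P = Set.range Q ∧ m = n := by
  -- degenerate cases
  rcases Nat.eq_zero_or_pos n with hn | hn
  · subst hn
    have hPu : (⋂ i, P i) = Set.univ := by
      rw [heq]; exact Set.iInter_of_empty Q
    rcases Nat.eq_zero_or_pos m with hm | hm
    · subst hm
      constructor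
      · simp [Set.range_eq_empty]
      · rfl
    · exfalso
      have i0 : Fin m := ⟨0, hm⟩
      have h1 : Set.univ ⊆ P i0 := by
        rw [← hPu]; exact Set.iInter_subset P i0
      have h2 : P i0 = Set.univ := Set.eq_univ_of_univ_subset h1
      have h3 : Sset M = Set.univ := Set.eq_univ_of_univ_subset (h2 ▸ (hP i0).1.1)
      exact (hP i0).2.1 (h2.trans h3.symm)
  rcases Nat.eq_zero_or_pos m with hm | hm
  · subst hm
    exfalso
    have hQu : (⋂ j, Q j) = Set.univ := by
      rw [← heq]; exact Set.iInter_of_empty P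
    have j0 : Fin n := ⟨0, hn⟩
    have h1 : Set.univ ⊆ Q j0 := by
      rw [← hQu]; exact Set.iInter_subset Q j0
    have h2 : Q j0 = Set.univ := Set.eq_univ_of_univ_subset h1
    have h3 : Sset M = Set.univ := Set.eq_univ_of_univ_subset (h2 ▸ (hQ j0).1.1)
    exact (hQ j0).2.1 (h2.trans h3.symm)
  -- main case
  have hunivQ : (⋂ j ∈ (Finset.univ : Finset (Fin n)), Q j) = ⋂ j, Q j := by
    simp
  have hunivP : (⋂ i ∈ (Finset.univ : Finset (Fin m)), P i) = ⋂ i, P i := by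
    simp
  have findQ : ∀ i : Fin m, ∃ j, Q j ⊆ P i := by
    intro i
    have hsub : (⋂ j ∈ (Finset.univ : Finset (Fin n)), Q j) ⊆ P i := by
      rw [hunivQ, ← heq]; exact Set.iInter_subset P i
    obtain ⟨j, _, hj⟩ := key_lemma M Q (fun j => (hQ j).1) (hP i)
      Finset.univ (Finset.univ_nonempty_iff.mpr ⟨⟨0, hn⟩⟩) hsub
    exact ⟨j, hj⟩
  have findP : ∀ j : Fin n, ∃ i, P i ⊆ Q j := by
    intro j
    have hsub : (⋂ i ∈ (Finset.univ : Finset (Fin m)), P i) ⊆ Q j := by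
      rw [hunivP, heq]; exact Set.iInter_subset Q j
    obtain ⟨i, _, hi⟩ := key_lemma M P (fun i => (hP i).1) (hQ j)
      Finset.univ (Finset.univ_nonempty_iff.mpr ⟨⟨0, hm⟩⟩) hsub
    exact ⟨i, hi⟩
  have hPQ : ∀ i : Fin m, ∃ j, P i = Q j := by
    intro i
    obtain ⟨j, hj⟩ := findQ i
    obtain ⟨i', hi'⟩ := findP j
    have hii : i' = i := by
      by_contra hne
      exact hPirr i' i hne (hi'.trans hj)
    subst hii
    exact ⟨j, le_antisymm hi' hj⟩
  have hQP : ∀ j : Fin n, ∃ i, Q j = P i := by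
    intro j
    obtain ⟨i, hi⟩ := findP j
    obtain ⟨j', hj'⟩ := findQ i
    have hjj : j' = j := by
      by_contra hne
      exact hQirr j' j hne (hj'.trans hi)
    subst hjj
    exact ⟨i, le_antisymm hj' hi⟩
  have hrange : Set.range P = Set.range Q := by
    apply Set.Subset.antisymm
    · rintro _ ⟨i, rfl⟩
      obtain ⟨j, hj⟩ := hPQ i
      exact ⟨j, hj.symm⟩
    · rintro _ ⟨j, rfl⟩
      obtain ⟨i, hi⟩ := hQP j
      exact ⟨i, hi.symm⟩
  refine ⟨hrange, ?_⟩
  have hPinj : Function.Injective P := by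
    intro i i' h
    by_contra hne
    exact hPirr i i' hne h.le
  have hQinj : Function.Injective Q := by
    intro j j' h
    by_contra hne
    exact hQirr j j' hne h.le
  have := Nat.card_range_of_injective hPinj
  have := Nat.card_range_of_injective hQinj
  calc m = Nat.card (Fin m) := by simp
    _ = Nat.card (Set.range P) := (Nat.card_range_of_injective hPinj).symm
    _ = Nat.card (Set.range Q) := by rw [hrange]
    _ = Nat.card (Fin n) := Nat.card_range_of_injective hQinj
    _ = n := by simp
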